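/- Let V and W be varieties of Ω-algebras of the same type without nullary operation symbols, and let Σ be an equational base of V. Then the variety H(V ∘ W) generated by the Mal'tsev product V ∘ W is exactly the variety defined by the set of identities Σ^p. -/

import Mathlib

structure Signature where
  symbols : Type
  arity : symbols → ℕ

structure Alg (S : Signature) where
  carrier : Type
  op : ∀ ω : S.symbols, (Fin (S.arity ω) → carrier) → carrier
  nonempty : Nonempty carrier

inductive Term (S : Signature) (X : Type) : Type
  | var : X → Term S X
  | app : ∀ ω : S.symbols, (Fin (S.arity ω) → Term S X) → Term S X

def Term.eval {S : Signature} {X : Type} (A : Alg S) (env : X → A.carrier) :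
    Term S X → A.carrier
  | .var x => env x
  | .app ω ts => A.op ω fun i => (ts i).eval A env

/-- The algebra `A` satisfies the identity `u = v`. -/
def Alg.sat {S : Signature} (A : Alg S) {X : Type} (u v : Term S X) : Prop :=
  ∀ env : X → A.carrier, u.eval A env = v.eval A env

/-- An identity: a pair of terms in the countably many variables `x₀, x₁, …`. -/
abbrev Ident (S : Signature) := Term S ℕ × Term S ℕ

/-- `A` lies in the variety axiomatized by the set of identities `E`. -/
def Alg.Models {S : Signature} (A : Alg S) (E : Set (Ident S)) : Prop :=
  ∀ e ∈ E, A.sat e.1 e.2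

/-- The identity `u = v` holds in the variety axiomatized by `E`. -/
def Conseq {S : Signature} (E : Set (Ident S)) {X : Type} (u v : Term S X) : Prop :=
  ∀ A : Alg S, A.Models E → A.sat u v

/-- `a` is an idempotent element of `A`. -/
def Alg.IsIdem {S : Signature} (A : Alg S) (a : A.carrier) : Prop :=
  ∀ ω : S.symbols, A.op ω (fun _ => a) = a

/-- `B` is (the universe of) a subalgebra of `A`. -/
def Alg.IsSubuniverse {S : Signature} (A : Alg S) (B : Set A.carrier) : Prop :=
  ∀ ω (a : Fin (S.arity ω) → A.carrier), (∀ i, a i ∈ B) → A.op ω a ∈ B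

/-- The subalgebra of `A` on a nonempty subuniverse `B`. -/
def Alg.subAlg {S : Signature} (A : Alg S) (B : Set A.carrier)
    (h : A.IsSubuniverse B) (hne : B.Nonempty) : Alg S where
  carrier := B
  op ω a := ⟨A.op ω fun i => (a i : A.carrier), h ω _ fun i => (a i).2⟩
  nonempty := hne.to_subtype

/-- A congruence of `A`: an equivalence relation compatible with all operations. -/
structure Congruence {S : Signature} (A : Alg S) where
  rel : A.carrier → A.carrier → Prop
  iseqv : Equivalence rel
  compat : ∀ ω (a b : Fin (S.arity ω) → A.carrier),
    (∀ i, rel (a i) (b i)) → rel (A.op ω a) (A.op ω b)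

def Congruence.setoid {S : Signature} {A : Alg S} (θ : Congruence A) :
    Setoid A.carrier := ⟨θ.rel, θ.iseqv⟩

/-- The quotient algebra `A/θ`. -/
noncomputable def Alg.quot {S : Signature} (A : Alg S) (θ : Congruence A) : Alg S where
  carrier := Quotient θ.setoid
  op ω q := Quotient.mk θ.setoid (A.op ω fun i => (q i).out)
  nonempty := A.nonempty.map (Quotient.mk θ.setoid)

/-- Membership in the Mal'tsev product of the varieties axiomatized by `V` and `W`:
`A` has a congruence `θ` with `A/θ` in (the variety of) `W` such that every
`θ`-class which is a subalgebra of `A` is an algebra in (the variety of) `V`. -/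
def InMaltsev {S : Signature} (V W : Set (Ident S)) (A : Alg S) : Prop :=
  ∃ θ : Congruence A, (A.quot θ).Models W ∧
    ∀ a : A.carrier, ∀ h : A.IsSubuniverse {b | θ.rel a b},
      (A.subAlg {b | θ.rel a b} h ⟨a, θ.iseqv.refl a⟩).Models V

/-- A class of algebras is a variety iff it is axiomatized by some set of identities. -/
def IsVarietyClass {S : Signature} (K : Alg S → Prop) : Prop :=
  ∃ E : Set (Ident S), ∀ A : Alg S, K A ↔ A.Models E

def Term.subst {S : Signature} {X Y : Type} (f : X → Term S Y) :
    Term S X → Term S Y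
  | .var x => f x
  | .app ω ts => .app ω fun i => (ts i).subst f

/-- The set `σᵖ` of identities obtained from the identity `σ` by substituting for
its variables pairwise `W`-equivalent term idempotents of (the variety of) `W`. -/
def sigmaP {S : Signature} (W : Set (Ident S)) (σ : Ident S) : Set (Ident S) :=
  { e | ∃ r : ℕ → Term S ℕ,
      (∀ i j : ℕ, Conseq W (r i) (r j)) ∧
      (∀ ω : S.symbols, Conseq W (Term.app ω fun _ => r 0) (r 0)) ∧
      e = (σ.1.subst r, σ.2.subst r) }

/-- `Σᵖ = ⋃_{σ ∈ Σ} σᵖ`. -/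
def SigmaP {S : Signature} (W : Set (Ident S)) (Sg : Set (Ident S)) :
    Set (Ident S) :=
  ⋃ σ ∈ Sg, sigmaP W σ

/-! ### Auxiliary lemmas -/

theorem eval_subst {S : Signature} (A : Alg S) {X Y : Type} (f : X → Term S Y)
    (env : Y → A.carrier) : ∀ t : Term S X,
    (t.subst f).eval A env = t.eval A (fun x => (f x).eval A env)
  | .var _ => rfl
  | .app ω ts => by
      show A.op ω (fun i => ((ts i).subst f).eval A env) = A.op ω _
      congr 1
      funext i
      exact eval_subst A f env (ts i)

theorem Conseq.trans' {S : Signature} {E : Set (Ident S)} {X : Type}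
    {a b c : Term S X} (h1 : Conseq E a b) (h2 : Conseq E b c) : Conseq E a c :=
  fun A hA env => (h1 A hA env).trans (h2 A hA env)

theorem Conseq.symm' {S : Signature} {E : Set (Ident S)} {X : Type}
    {a b : Term S X} (h : Conseq E a b) : Conseq E b a :=
  fun A hA env => (h A hA env).symm

theorem Conseq.refl' {S : Signature} {E : Set (Ident S)} {X : Type}
    (a : Term S X) : Conseq E a a := fun _ _ _ => rfl

theorem conseq_app {S : Signature} (E : Set (Ident S)) (ω : S.symbols)
    (a b : Fin (S.arity ω) → Term S ℕ) (h : ∀ i, Conseq E (a i) (b i)) :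
    Conseq E (Term.app ω a) (Term.app ω b) := by
  intro A hA env
  show A.op ω _ = A.op ω _
  congr 1
  funext i
  exact h i A hA env

theorem conseq_subst {S : Signature} {E : Set (Ident S)} {u v : Term S ℕ}
    (h : Conseq E u v) (g : ℕ → Term S ℕ) :
    Conseq E (u.subst g) (v.subst g) := by
  intro A hA env
  rw [eval_subst, eval_subst]
  exact h A hA _

/-- Evaluation at a constant idempotent environment. -/
theorem idem_eval {S : Signature} (B : Alg S) (a : B.carrier) (ha : B.IsIdem a)
    {X : Type} : ∀ t : Term S X, t.eval B (fun _ => a) = a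
  | .var _ => rfl
  | .app ω ts => by
      show B.op ω (fun i => (ts i).eval B (fun _ => a)) = a
      have h : (fun i => (ts i).eval B (fun _ => a)) = fun _ => a :=
        funext fun i => idem_eval B a ha (ts i)
      rw [h]
      exact ha ω

/-- Every model of `W` models `Σᵖ`. -/
theorem wmodels_SigmaP {S : Signature} (W Sg : Set (Ident S)) (B : Alg S)
    (hB : B.Models W) : B.Models (SigmaP W Sg) := by
  intro e he
  rw [SigmaP, Set.mem_iUnion₂] at he
  obtain ⟨σ, hσ, r, hpair, hidem, rfl⟩ := he
  intro env
  show (σ.1.subst r).eval B env = (σ.2.subst r).eval B env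
  rw [eval_subst, eval_subst]
  have ha : B.IsIdem ((r 0).eval B env) := by
    intro ω
    have h := hidem ω B hB env
    exact h
  have henv : (fun x => (r x).eval B env) = fun _ => (r 0).eval B env :=
    funext fun i => hpair i 0 B hB env
  rw [henv, idem_eval B _ ha, idem_eval B _ ha]

/-- Evaluation in a subalgebra, composed with the inclusion. -/
theorem subAlg_eval {S : Signature} (A : Alg S) (B : Set A.carrier)
    (h : A.IsSubuniverse B) (hne : B.Nonempty) {X : Type}
    (env : X → (A.subAlg B h hne).carrier) :
    ∀ t : Term S X,
      (Term.eval (A.subAlg B h hne) env t).val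
        = Term.eval A (fun x => (env x).val) t
  | .var _ => rfl
  | .app ω ts => by
      show A.op ω (fun i => (Term.eval (A.subAlg B h hne) env (ts i)).val) = A.op ω _
      congr 1
      funext i
      exact subAlg_eval A B h hne env (ts i)

theorem setoid_mk_out {α : Sort*} (s : Setoid α) (a : α) :
    s.r (Quotient.mk s a).out a :=
  Quotient.exact (Quotient.out_eq (Quotient.mk s a))

/-- Evaluation in a quotient algebra. -/
theorem quot_eval {S : Signature} (A : Alg S) (θ : Congruence A) {X : Type}
    (env : X → (A.quot θ).carrier) :
    ∀ t : Term S X,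
      Term.eval (A.quot θ) env t
        = Quotient.mk θ.setoid (Term.eval A (fun x => (env x).out) t)
  | .var x => (Quotient.out_eq _).symm
  | .app ω ts => by
      show Quotient.mk θ.setoid
          (A.op ω fun i => (Term.eval (A.quot θ) env (ts i)).out) = _
      apply Quotient.sound
      apply θ.compat
      intro i
      rw [quot_eval A θ env (ts i)]
      exact setoid_mk_out θ.setoid _

/-- Evaluation respects pointwise θ-related environments. -/
theorem eval_congr {S : Signature} (A : Alg S) (θ : Congruence A) {X : Type}
    (e1 e2 : X → A.carrier) (h : ∀ x, θ.rel (e1 x) (e2 x)) :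
    ∀ t : Term S X, θ.rel (t.eval A e1) (t.eval A e2)
  | .var x => h x
  | .app ω ts => θ.compat ω _ _ fun i => eval_congr A θ e1 e2 h (ts i)

/-- A member of the Mal'tsev product satisfies `Σᵖ`. -/
theorem maltsev_sat {S : Signature} (V W Sg : Set (Ident S))
    (hbase : ∀ A : Alg S, A.Models V ↔ A.Models Sg)
    (B : Alg S) (hB : InMaltsev V W B) : B.Models (SigmaP W Sg) := by
  obtain ⟨θ, hWq, hV⟩ := hB
  intro e he
  rw [SigmaP, Set.mem_iUnion₂] at he
  obtain ⟨σ, hσ, r, hpair, hidem, rfl⟩ := he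
  intro env
  show (σ.1.subst r).eval B env = (σ.2.subst r).eval B env
  have key : ∀ t s : Term S ℕ, Conseq W t s →
      θ.rel (t.eval B env) (s.eval B env) := by
    intro t s h
    have h1 := h (B.quot θ) hWq (fun x => Quotient.mk θ.setoid (env x))
    erw [quot_eval, quot_eval] at h1
    have h2 := Quotient.exact h1
    have h3 : ∀ x, θ.rel ((Quotient.mk θ.setoid (env x)).out) (env x) :=
      fun x => setoid_mk_out θ.setoid (env x)
    exact θ.iseqv.trans (θ.iseqv.symm (eval_congr B θ _ _ h3 t))
      (θ.iseqv.trans h2 (eval_congr B θ _ _ h3 s))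
  have hrel : ∀ i, θ.rel ((r i).eval B env) ((r 0).eval B env) :=
    fun i => key _ _ (hpair i 0)
  have hidem' : ∀ ω : S.symbols,
      θ.rel (B.op ω fun _ => (r 0).eval B env) ((r 0).eval B env) := by
    intro ω
    have h := key _ _ (hidem ω)
    exact h
  have hsub : B.IsSubuniverse {b | θ.rel ((r 0).eval B env) b} := by
    intro ω b hb
    exact θ.iseqv.trans (θ.iseqv.symm (hidem' ω))
      (θ.compat ω _ _ fun i => hb i)
  have hmodels := (hbase _).mp (hV ((r 0).eval B env) hsub)
  have hsat := hmodels σ hσ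
    (fun i => ⟨(r i).eval B env, θ.iseqv.symm (hrel i)⟩)
  have h1 := congrArg Subtype.val hsat
  erw [subAlg_eval, subAlg_eval] at h1
  rw [eval_subst, eval_subst]
  exact h1

/-! ### The free algebra of the variety defined by a set of identities -/

/-- Terms modulo consequence of `E`. -/
def conE {S : Signature} (E : Set (Ident S)) : Setoid (Term S ℕ) where
  r t s := Conseq E t s
  iseqv := ⟨fun a => Conseq.refl' a, Conseq.symm', Conseq.trans'⟩

/-- The free algebra on countably many generators of the variety defined by `E`. -/
noncomputable def FA {S : Signature} (E : Set (Ident S)) : Alg S where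
  carrier := Quotient (conE E)
  op ω q := Quotient.mk (conE E) (Term.app ω fun i => (q i).out)
  nonempty := ⟨Quotient.mk (conE E) (Term.var 0)⟩

theorem out_conseq {S : Signature} (E : Set (Ident S)) (t : Term S ℕ) :
    Conseq E ((Quotient.mk (conE E) t).out) t :=
  setoid_mk_out (conE E) t

theorem FA_eval {S : Signature} (E : Set (Ident S))
    (env : ℕ → (FA E).carrier) :
    ∀ t : Term S ℕ,
      Term.eval (FA E) env t
        = Quotient.mk (conE E) (t.subst fun x => (env x).out)
  | .var x => (Quotient.out_eq _).symm
  | .app ω ts => by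
      show Quotient.mk (conE E)
          (Term.app ω fun i => (Term.eval (FA E) env (ts i)).out) = _
      apply Quotient.sound
      apply conseq_app
      intro i
      rw [FA_eval E env (ts i)]
      exact out_conseq E _

theorem FA_eval_var {S : Signature} (E : Set (Ident S)) :
    ∀ t : Term S ℕ,
      Term.eval (FA E) (fun x => Quotient.mk (conE E) (Term.var x)) t
        = Quotient.mk (conE E) t
  | .var _ => rfl
  | .app ω ts => by
      show Quotient.mk (conE E) (Term.app ω fun i =>
          (Term.eval (FA E) (fun x => Quotient.mk (conE E) (Term.var x)) (ts i)).out) = _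
      apply Quotient.sound
      apply conseq_app
      intro i
      rw [FA_eval_var E (ts i)]
      exact out_conseq E _

/-- The congruence on the free algebra induced by `W`-consequence. -/
def thetaW {S : Signature} (W E : Set (Ident S))
    (hEW : ∀ t s : Term S ℕ, Conseq E t s → Conseq W t s) :
    Congruence (FA E) where
  rel a b := Conseq W a.out b.out
  iseqv := ⟨fun a => Conseq.refl' _, Conseq.symm', Conseq.trans'⟩
  compat ω a b h := by
    have h1 : Conseq E ((Alg.op (FA E) ω a).out) (Term.app ω fun i => (a i).out) :=
      setoid_mk_out (conE E) (Term.app ω fun i => (a i).out)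
    have h2 : Conseq E ((Alg.op (FA E) ω b).out) (Term.app ω fun i => (b i).out) :=
      setoid_mk_out (conE E) (Term.app ω fun i => (b i).out)
    exact Conseq.trans' (hEW _ _ h1)
      (Conseq.trans' (conseq_app W ω _ _ h) (Conseq.symm' (hEW _ _ h2)))

/-- The free algebra of `Mod(Σᵖ)` lies in the Mal'tsev product `V ∘ W`. -/
theorem FA_in_maltsev {S : Signature} (V W Sg : Set (Ident S))
    (hbase : ∀ A : Alg S, A.Models V ↔ A.Models Sg) :
    InMaltsev V W (FA (SigmaP W Sg)) := by
  have hEW : ∀ t s : Term S ℕ, Conseq (SigmaP W Sg) t s → Conseq W t s :=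
    fun t s h B hB => h B (wmodels_SigmaP W Sg B hB)
  refine ⟨thetaW W (SigmaP W Sg) hEW, ?_, ?_⟩
  · -- the quotient models W
    intro e he env
    rw [quot_eval, quot_eval, FA_eval, FA_eval]
    apply Quotient.sound
    show Conseq W _ _
    refine Conseq.trans' (hEW _ _ (out_conseq _ _))
      (Conseq.trans' ?_ (Conseq.symm' (hEW _ _ (out_conseq _ _))))
    exact conseq_subst (fun A hA => hA e he) _
  · -- congruence classes that are subuniverses model V
    intro a h
    apply (hbase _).mpr
    intro σ hσ env
    have hprop : ∀ i : ℕ, Conseq W a.out ((env i).val.out) :=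
      fun i => (env i).property
    have hpair : ∀ i j : ℕ,
        Conseq W ((env i).val.out) ((env j).val.out) :=
      fun i j => Conseq.trans' (Conseq.symm' (hprop i)) (hprop j)
    have hidem : ∀ ω : S.symbols,
        Conseq W (Term.app ω fun _ => (env 0).val.out) ((env 0).val.out) := by
      intro ω
      have hmem : Conseq W a.out
          ((Alg.op (FA (SigmaP W Sg)) ω fun _ => (env 0).val).out) :=
        h ω (fun _ => (env 0).val) (fun _ => (env 0).property)
      have hout : Conseq (SigmaP W Sg)
          ((Alg.op (FA (SigmaP W Sg)) ω fun _ => (env 0).val).out)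
          (Term.app ω fun _ => (env 0).val.out) :=
        setoid_mk_out (conE (SigmaP W Sg)) (Term.app ω fun _ => (env 0).val.out)
      exact Conseq.trans' (Conseq.symm' (hEW _ _ hout))
        (Conseq.trans' (Conseq.symm' hmem) (hprop 0))
    have hmemE : (σ.1.subst fun i => (env i).val.out,
        σ.2.subst fun i => (env i).val.out) ∈ SigmaP W Sg :=
      Set.mem_biUnion hσ ⟨fun i => (env i).val.out, hpair, hidem, rfl⟩
    have hconseq : Conseq (SigmaP W Sg)
        (σ.1.subst fun i => (env i).val.out)
        (σ.2.subst fun i => (env i).val.out) :=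
      fun A hA => hA _ hmemE
    apply Subtype.ext
    erw [subAlg_eval, subAlg_eval, FA_eval, FA_eval]
    exact Quotient.sound hconseq

/-- If `Σ` is an equational base of the variety `V`, then the
variety `H(V ∘ W)` generated by the Mal'tsev product `V ∘ W` (i.e. the class of
models of all identities true throughout `V ∘ W`) is exactly the variety defined
by `Σᵖ`. -/
theorem stmt_6 (S : Signature) (h0 : ∀ ω : S.symbols, 0 < S.arity ω)
    (V W : Set (Ident S)) (Sg : Set (Ident S))
    (hbase : ∀ A : Alg S, A.Models V ↔ A.Models Sg) :
    ∀ A : Alg S, A.Models (SigmaP W Sg) ↔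
      ∀ u v : Term S ℕ, (∀ B : Alg S, InMaltsev V W B → B.sat u v) → A.sat u v := by
  intro A
  constructor
  · intro hA u v huv
    have hsat := huv _ (FA_in_maltsev V W Sg hbase)
    have h1 := hsat (fun x => Quotient.mk (conE (SigmaP W Sg)) (Term.var x))
    rw [FA_eval_var, FA_eval_var] at h1
    have h2 : Conseq (SigmaP W Sg) u v := Quotient.exact h1
    exact h2 A hA
  · intro hA e he
    exact hA e.1 e.2 (fun B hB => maltsev_sat V W Sg hbase B hB e he)
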